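/- Let q be a real number with q > 0 and q ≠ 1, and let r ≥ 0 be an integer. Then for all integers n ≥ 1 and N ≥ 1, n · Σ_{k=0}^{N−1} q^{(r+1)·k} · [k]^{n−1} + (q−1) · r · Σ_{k=0}^{N−1} q^{r·k} · [k]^n = q^{r·N} · β_n^{(r)}(N) − β_n^{(r)}(0). -/

import Mathlib

open Finset

/-- The q-bracket: `[x] = (q^x - 1)/(q - 1)`. -/
noncomputable def qb (q x : ℝ) : ℝ := (q ^ x - 1) / (q - 1)

/-- The extended Carlitz q-Bernoulli polynomials of order `r`, with the convention
`(k+r)/[k+r] = 1` when `k + r = 0`. -/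
noncomputable def extBeta (q : ℝ) (r n : ℕ) (x : ℝ) : ℝ :=
  ((q - 1) ^ n)⁻¹ *
    ∑ k ∈ range (n + 1),
      (-1 : ℝ) ^ (n - k) * (n.choose k : ℝ) *
        (if k + r = 0 then 1 else ((k + r : ℕ) : ℝ) / qb q ((k + r : ℕ) : ℝ)) *
        q ^ ((k : ℝ) * x)

lemma binom_sum (n : ℕ) (t : ℝ) :
    ∑ k ∈ range (n+1), (-1:ℝ)^(n-k) * (n.choose k : ℝ) * t^k = (t-1)^n := by
  have := add_pow t (-1 : ℝ) n
  rw [show t + (-1:ℝ) = t - 1 by ring] at this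
  rw [this]
  exact Finset.sum_congr rfl fun k hk => by ring

lemma key (n : ℕ) (hn : 1 ≤ n) (t r : ℝ) :
    ∑ k ∈ range (n+1), (-1:ℝ)^(n-k) * (n.choose k : ℝ) * ((k:ℝ) + r) * t^k
      = n * t * (t-1)^(n-1) + r * (t-1)^n := by
  obtain ⟨m, rfl⟩ := Nat.exists_eq_add_of_le hn
  have split : ∀ k ∈ range (1+m+1),
      (-1:ℝ)^(1+m-k) * ((1+m).choose k : ℝ) * ((k:ℝ) + r) * t^k
      = (-1:ℝ)^(1+m-k) * ((1+m).choose k : ℝ) * (k:ℝ) * t^k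
        + r * ((-1:ℝ)^(1+m-k) * ((1+m).choose k : ℝ) * t^k) := by
    intro k _; ring
  rw [Finset.sum_congr rfl split, Finset.sum_add_distrib, ← Finset.mul_sum, binom_sum]
  congr 1
  rw [Finset.sum_range_succ']
  simp only [Nat.cast_zero, mul_zero, zero_mul, pow_zero, mul_one, add_zero]
  have step : ∀ i ∈ range (1+m),
      (-1:ℝ)^(1+m-(i+1)) * ((1+m).choose (i+1) : ℝ) * ((i+1:ℕ):ℝ) * t^(i+1)
      = ((1+m:ℕ):ℝ) * t * ((-1:ℝ)^(m-i) * (m.choose i : ℝ) * t^i) := by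
    intro i hi
    have h1 : (1+m).choose (i+1) * (i+1) = (1+m) * m.choose i := by
      rw [Nat.add_comm 1 m]
      exact (Nat.add_one_mul_choose_eq m i).symm
    have h2 : 1+m-(i+1) = m - i := by omega
    rw [h2]
    have h3 := congrArg (Nat.cast : ℕ → ℝ) h1
    push_cast at h3 ⊢
    linear_combination ((-1:ℝ)^(m-i) * t^(i+1)) * h3
  rw [Finset.sum_congr rfl step, ← Finset.mul_sum,
    show 1+m = m+1 by omega, binom_sum, show m+1-1 = m by omega]

lemma qpow_ne_one (q : ℝ) (hq : 0 < q) (hq1 : q ≠ 1) (m : ℕ) (hm : 1 ≤ m) :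
    q ^ m ≠ 1 := by
  rcases lt_or_gt_of_ne hq1 with h | h
  · exact ne_of_lt (pow_lt_one₀ hq.le h (by omega))
  · exact ne_of_gt (one_lt_pow₀ h (by omega))

lemma c_mul (q : ℝ) (hq : 0 < q) (hq1 : q ≠ 1) (m : ℕ) :
    (if m = 0 then (1:ℝ) else (m:ℝ) / qb q (m:ℝ)) * (q^m - 1) = (m:ℝ) * (q-1) := by
  have hq1' : q - 1 ≠ 0 := sub_ne_zero.mpr hq1
  rcases Nat.eq_zero_or_pos m with h | h
  · subst h; simp
  · rw [if_neg (by omega), qb, Real.rpow_natCast]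
    have hne : q^m - 1 ≠ 0 := sub_ne_zero.mpr (qpow_ne_one q hq hq1 m h)
    field_simp

lemma step (q : ℝ) (hq : 0 < q) (hq1 : q ≠ 1) (r n N : ℕ) (hn : 1 ≤ n) :
    q^(r*(N+1)) * extBeta q r n ((N:ℝ)+1) - q^(r*N) * extBeta q r n (N:ℝ)
      = (n:ℝ) * q^((r+1)*N) * (qb q (N:ℝ))^(n-1)
        + (q-1)*(r:ℝ)*q^(r*N)*(qb q (N:ℝ))^n := by
  have hq1' : q - 1 ≠ 0 := sub_ne_zero.mpr hq1
  obtain ⟨m, rfl⟩ : ∃ m, n = m + 1 := ⟨n-1, by omega⟩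
  set t := q ^ N with ht
  have hqb : qb q (N:ℝ) = (t - 1)/(q-1) := by rw [qb, Real.rpow_natCast]
  have e1 : ∀ k : ℕ, q ^ ((k:ℝ) * ((N:ℝ)+1)) = t^k * q^k := by
    intro k
    rw [show (k:ℝ) * ((N:ℝ)+1) = ((k*N + k : ℕ):ℝ) by push_cast; ring,
      Real.rpow_natCast, pow_add, mul_comm k N, pow_mul]
  have e2 : ∀ k : ℕ, q ^ ((k:ℝ) * (N:ℝ)) = t^k := by
    intro k
    rw [show (k:ℝ) * (N:ℝ) = ((k*N : ℕ):ℝ) by push_cast; ring, Real.rpow_natCast,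
      mul_comm k N, pow_mul]
  set c : ℕ → ℝ := fun k =>
    (if k + r = 0 then (1:ℝ) else ((k+r:ℕ):ℝ) / qb q ((k+r:ℕ):ℝ)) with hc
  have c_def : ∀ k : ℕ, c k * (q^(k+r) - 1) = ((k:ℝ)+(r:ℝ)) * (q-1) := by
    intro k
    have h := c_mul q hq hq1 (k+r)
    rw [show ((k:ℝ)+(r:ℝ)) = ((k+r:ℕ):ℝ) by push_cast; ring]
    exact h
  have hE1 : extBeta q r (m+1) ((N:ℝ)+1)
      = ((q-1)^(m+1))⁻¹ * ∑ k ∈ range (m+2), (-1:ℝ)^(m+1-k) * ((m+1).choose k) * c k * (t^k * q^k) := by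
    rw [extBeta]
    congr 1
    exact Finset.sum_congr rfl fun k _ => by rw [e1]
  have hE0 : extBeta q r (m+1) (N:ℝ)
      = ((q-1)^(m+1))⁻¹ * ∑ k ∈ range (m+2), (-1:ℝ)^(m+1-k) * ((m+1).choose k) * c k * t^k := by
    rw [extBeta]
    congr 1
    exact Finset.sum_congr rfl fun k _ => by rw [e2]
  have hS2 : ∑ k ∈ range (m+2), (-1:ℝ)^(m+1-k) * ((m+1).choose k) * (c k * (q^(k+r)-1)) * t^k
      = q^r * (∑ k ∈ range (m+2), (-1:ℝ)^(m+1-k) * ((m+1).choose k) * c k * (t^k * q^k))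
        - ∑ k ∈ range (m+2), (-1:ℝ)^(m+1-k) * ((m+1).choose k) * c k * t^k := by
    rw [Finset.mul_sum, ← Finset.sum_sub_distrib]
    exact Finset.sum_congr rfl fun k _ => by rw [pow_add]; ring
  have hS2' : ∑ k ∈ range (m+2), (-1:ℝ)^(m+1-k) * ((m+1).choose k) * (c k * (q^(k+r)-1)) * t^k
      = (q-1) * (((m:ℝ)+1) * t * (t-1)^m + (r:ℝ) * (t-1)^(m+1)) := by
    rw [Finset.sum_congr rfl fun k _ => by rw [c_def k]]
    rw [show (∑ k ∈ range (m+2), (-1:ℝ)^(m+1-k) * (((m+1).choose k : ℕ):ℝ) * (((k:ℝ)+(r:ℝ)) * (q-1)) * t^k)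
        = (q-1) * ∑ k ∈ range (m+1+1), (-1:ℝ)^(m+1-k) * (((m+1).choose k : ℕ):ℝ) * ((k:ℝ)+(r:ℝ)) * t^k by
      rw [Finset.mul_sum]; exact Finset.sum_congr rfl fun k _ => by ring]
    rw [key (m+1) (by omega) t (r:ℝ)]
    push_cast
    ring_nf
  have hpow1 : q^(r*(N+1)) = q^(r*N) * q^r := by rw [mul_add, pow_add, mul_one]
  have hpow2 : q^((r+1)*N) = q^(r*N) * t := by rw [add_mul, pow_add, one_mul]
  have hcomb := hS2.symm.trans hS2'
  rw [hE1, hE0, hpow1, hpow2, hqb]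
  set S1 := ∑ k ∈ range (m+2), (-1:ℝ)^(m+1-k) * ((m+1).choose k) * c k * (t^k * q^k) with hS1d
  set S0 := ∑ k ∈ range (m+2), (-1:ℝ)^(m+1-k) * ((m+1).choose k) * c k * t^k with hS0d
  have hfold : q^(r*N) * q^r * (((q-1)^(m+1))⁻¹ * S1) - q^(r*N) * (((q-1)^(m+1))⁻¹ * S0)
      = q^(r*N) * ((q-1)^(m+1))⁻¹ * (q^r * S1 - S0) := by ring
  rw [hfold, hcomb]
  have hq1n : ((q-1)^(m+1)) ≠ 0 := pow_ne_zero _ hq1'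
  rw [Nat.add_sub_cancel, div_pow, div_pow]
  push_cast
  field_simp
  ring

theorem q_power_sum_via_extended_beta (q : ℝ) (hq : 0 < q) (hq1 : q ≠ 1) (r : ℕ) :
    ∀ n N : ℕ, 1 ≤ n → 1 ≤ N →
      (n : ℝ) * ∑ k ∈ range N, q ^ ((r + 1) * k) * (qb q k) ^ (n - 1)
        + (q - 1) * (r : ℝ) * ∑ k ∈ range N, q ^ (r * k) * (qb q k) ^ n
        = q ^ (r * N) * extBeta q r n (N : ℝ) - extBeta q r n 0 := by
  intro n N hn hN
  clear hN
  induction N with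
  | zero => simp
  | succ N ih =>
    rw [Finset.sum_range_succ, Finset.sum_range_succ]
    have hstep := step q hq hq1 r n N hn
    push_cast
    linear_combination ih - hstep
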